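/- Let 0 < s ≤ 1 and let g be a real-valued function on the punctured closed disk Δ_s*. Suppose there exist real numbers a, a' and subpolynomial functions μ, μ' such that −log μ(1/|z|) ≤ g(z) + a·log|z| ≤ log μ(1/|z|) and −log μ'(1/|z|) ≤ g(z) + a'·log|z| ≤ log μ'(1/|z|) for all z with 0 < |z| ≤ s. Then a = a'. (The local content of Proposition 2.7 of the paper: uniqueness of the subpolynomial Lear extension coefficient.) -/

import Mathlib

open Filter Real

/-- A function `μ : ℝ_{>0} → ℝ_{>0}` is subpolynomial if `μ(x)/x^n → 0` as `x → ∞`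
for every real `n > 0`. -/
def Subpolynomial (μ : ℝ → ℝ) : Prop :=
  (∀ x : ℝ, 0 < x → 0 < μ x) ∧
    ∀ n : ℝ, 0 < n → Tendsto (fun x : ℝ => μ x / x ^ n) atTop (nhds 0)

/-- Local content of Proposition 2.7: if a function `g` on the punctured closed disk of
radius `s` satisfies two-sided subpolynomial growth bounds with coefficients `a` and
`a'`, then `a = a'` (uniqueness of the subpolynomial Lear extension coefficient). -/
theorem stmt5 (s : ℝ) (hs0 : 0 < s) (hs1 : s ≤ 1)
    (g : ℂ → ℝ)
    (a a' : ℝ) (μ μ' : ℝ → ℝ) (hμ : Subpolynomial μ) (hμ' : Subpolynomial μ')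
    (hbound : ∀ z : ℂ, z ≠ 0 → ‖z‖ ≤ s →
      -Real.log (μ (1 / ‖z‖)) ≤ g z + a * Real.log (‖z‖) ∧
        g z + a * Real.log (‖z‖) ≤ Real.log (μ (1 / ‖z‖)))
    (hbound' : ∀ z : ℂ, z ≠ 0 → ‖z‖ ≤ s →
      -Real.log (μ' (1 / ‖z‖)) ≤ g z + a' * Real.log (‖z‖) ∧
        g z + a' * Real.log (‖z‖) ≤ Real.log (μ' (1 / ‖z‖))) :
    a = a' := by
  by_contra hne
  set c : ℝ := a - a' with hc
  have hc0 : c ≠ 0 := sub_ne_zero.mpr hne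
  have habs : 0 < |c| := abs_pos.mpr hc0
  set n : ℝ := |c| / 4 with hn
  have hn0 : 0 < n := by positivity
  have h1 : ∀ᶠ x : ℝ in atTop, μ x / x ^ n < 1 :=
    (hμ.2 n hn0).eventually (gt_mem_nhds one_pos)
  have h2 : ∀ᶠ x : ℝ in atTop, μ' x / x ^ n < 1 :=
    (hμ'.2 n hn0).eventually (gt_mem_nhds one_pos)
  have h3 : ∀ᶠ x : ℝ in atTop, max (1 / s) 2 ≤ x := eventually_ge_atTop _
  obtain ⟨x, hx1, hx2, hx3⟩ := (h1.and (h2.and h3)).exists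
  have hxs : 1 / s ≤ x := le_trans (le_max_left _ _) hx3
  have hx2le : (2 : ℝ) ≤ x := le_trans (le_max_right _ _) hx3
  have hx0 : 0 < x := by linarith
  have hL : 0 < Real.log x := Real.log_pos (by linarith)
  set z : ℂ := ((x⁻¹ : ℝ) : ℂ) with hz
  have hzabs : ‖z‖ = x⁻¹ := by
    rw [hz, Complex.norm_real, Real.norm_eq_abs, abs_of_pos (by positivity)]
  have hz0 : z ≠ 0 := by
    simp only [hz, ne_eq, Complex.ofReal_eq_zero]
    exact inv_ne_zero hx0.ne'
  have hzs : ‖z‖ ≤ s := by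
    rw [hzabs]
    rw [div_le_iff₀ hs0] at hxs
    rw [inv_le_comm₀ hx0 hs0, ← one_div]
    exact (div_le_iff₀ hs0).mpr (by linarith)
  have hinv : 1 / ‖z‖ = x := by
    rw [hzabs, one_div, inv_inv]
  have hlogz : Real.log (‖z‖) = -Real.log x := by
    rw [hzabs, Real.log_inv]
  obtain ⟨hb1, hb2⟩ := hbound z hz0 hzs
  obtain ⟨hb1', hb2'⟩ := hbound' z hz0 hzs
  rw [hinv, hlogz] at hb1 hb2 hb1' hb2'
  -- bound log μ x ≤ n * log x
  have hμx : 0 < μ x := hμ.1 x hx0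
  have hμ'x : 0 < μ' x := hμ'.1 x hx0
  have hxn : (0:ℝ) < x ^ n := Real.rpow_pos_of_pos hx0 n
  have hμlt : μ x < x ^ n := by
    rw [div_lt_one hxn] at hx1; exact hx1
  have hμ'lt : μ' x < x ^ n := by
    rw [div_lt_one hxn] at hx2; exact hx2
  have hlogμ : Real.log (μ x) ≤ n * Real.log x := by
    calc Real.log (μ x) ≤ Real.log (x ^ n) := Real.log_le_log hμx hμlt.le
      _ = n * Real.log x := Real.log_rpow hx0 n
  have hlogμ' : Real.log (μ' x) ≤ n * Real.log x := by
    calc Real.log (μ' x) ≤ Real.log (x ^ n) := Real.log_le_log hμ'x hμ'lt.le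
      _ = n * Real.log x := Real.log_rpow hx0 n
  -- combine
  have hkey : |c| * Real.log x ≤ 2 * n * Real.log x := by
    rcases abs_cases c with ⟨h, _⟩ | ⟨h, _⟩ <;> rw [h] <;> nlinarith
  have : |c| ≤ 2 * n := le_of_mul_le_mul_right (by linarith [hkey]) hL
  rw [hn] at this
  linarith
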